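/- Let N be a multiplicative n-Hom Lie superalgebra with α surjective. Then [C(N), QC(N)] ⊆ Hom(N, Z(N)): for every homogeneous α^k-centroid element D of degree ξ and every homogeneous α^s-quasicentroid element E of degree η, the supercommutator [D,E] = DE − (−1)^{ξη}ED maps N into the center Z(N). Moreover, if Z(N) = {0} then [C(N), QC(N)] = {0}. -/

import Mathlib

open scoped BigOperators

noncomputable section

variable {𝔽 : Type*} [Field 𝔽]
variable {N : Type*} [AddCommGroup N] [Module 𝔽 N]

/-- The sign `(-1)^g` for `g : ZMod 2`. -/
def sgn (𝔽 : Type*) [Field 𝔽] (g : ZMod 2) : 𝔽 := if g = 0 then 1 else -1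

/-- `|X_{i-1}|` : the sum of the degrees `d j` for `j < i`. -/
def psum {m : ℕ} (d : Fin m → ZMod 2) (i : Fin m) : ZMod 2 :=
  ∑ j ∈ Finset.univ.filter (fun j => j < i), d j

/-- `D` is homogeneous of degree `ξ` with respect to the `ℤ₂`-grading `gr`. -/
def Homog (gr : ZMod 2 → Submodule 𝔽 N) (ξ : ZMod 2) (D : N →ₗ[𝔽] N) : Prop :=
  ∀ g : ZMod 2, ∀ x ∈ gr g, D x ∈ gr (g + ξ)

/-- `(N, br, α)` is a multiplicative `n`-Hom Lie superalgebra, where `n = m + 1`: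
`N = N₀ ⊕ N₁` is `ℤ₂`-graded, the `n`-multilinear bracket `br` is even (adds degrees),
super skew-symmetric in adjacent arguments, `α` is even, multiplicative, and the super
Hom-Jacobi identity holds. -/
structure IsMNHLS {m : ℕ} (gr : ZMod 2 → Submodule 𝔽 N)
    (br : MultilinearMap 𝔽 (fun _ : Fin (m + 1) => N) N) (α : N →ₗ[𝔽] N) : Prop where
  internal : DirectSum.IsInternal gr
  alpha_even : ∀ g : ZMod 2, ∀ x ∈ gr g, α x ∈ gr g
  br_deg : ∀ (d : Fin (m + 1) → ZMod 2) (x : Fin (m + 1) → N),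
      (∀ i, x i ∈ gr (d i)) → br x ∈ gr (∑ i, d i)
  skew : ∀ (d : Fin (m + 1) → ZMod 2) (x : Fin (m + 1) → N),
      (∀ i, x i ∈ gr (d i)) → ∀ i j : Fin (m + 1), (i : ℕ) + 1 = (j : ℕ) →
      br x = -sgn 𝔽 (d i * d j) • br (x ∘ Equiv.swap i j)
  alpha_br : ∀ x : Fin (m + 1) → N, α (br x) = br fun i => α (x i)
  jacobi : ∀ (dx : Fin m → ZMod 2) (x : Fin m → N)
      (dy : Fin (m + 1) → ZMod 2) (y : Fin (m + 1) → N),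
      (∀ i, x i ∈ gr (dx i)) → (∀ i, y i ∈ gr (dy i)) →
      br (Fin.snoc (fun i => α (x i)) (br y)) =
        ∑ i : Fin (m + 1), sgn 𝔽 ((∑ j, dx j) * psum dy i) •
          br (Function.update (fun j => α (y j)) i (br (Fin.snoc x (y i))))

/-- `D` is a homogeneous `α^k`-derivation of degree `ξ`. -/
def IsDer {m : ℕ} (gr : ZMod 2 → Submodule 𝔽 N)
    (br : MultilinearMap 𝔽 (fun _ : Fin (m + 1) => N) N) (α : N →ₗ[𝔽] N)
    (k : ℕ) (ξ : ZMod 2) (D : N →ₗ[𝔽] N) : Prop :=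
  Homog gr ξ D ∧ D ∘ₗ α = α ∘ₗ D ∧
    ∀ (d : Fin (m + 1) → ZMod 2) (x : Fin (m + 1) → N), (∀ i, x i ∈ gr (d i)) →
      D (br x) = ∑ i : Fin (m + 1), sgn 𝔽 (ξ * psum d i) •
        br (Function.update (fun j => (α ^ k) (x j)) i (D (x i)))

/-- `D` is a homogeneous `α^k`-quasiderivation of degree `ξ` with associated map `D'`. -/
def IsQDerWith {m : ℕ} (gr : ZMod 2 → Submodule 𝔽 N)
    (br : MultilinearMap 𝔽 (fun _ : Fin (m + 1) => N) N) (α : N →ₗ[𝔽] N)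
    (k : ℕ) (ξ : ZMod 2) (D D' : N →ₗ[𝔽] N) : Prop :=
  Homog gr ξ D ∧ D ∘ₗ α = α ∘ₗ D ∧ Homog gr ξ D' ∧ D' ∘ₗ α = α ∘ₗ D' ∧
    ∀ (d : Fin (m + 1) → ZMod 2) (x : Fin (m + 1) → N), (∀ i, x i ∈ gr (d i)) →
      (∑ i : Fin (m + 1), sgn 𝔽 (ξ * psum d i) •
        br (Function.update (fun j => (α ^ k) (x j)) i (D (x i)))) = D' (br x)

/-- `D` is a homogeneous `α^k`-quasiderivation of degree `ξ`. -/
def IsQDer {m : ℕ} (gr : ZMod 2 → Submodule 𝔽 N)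
    (br : MultilinearMap 𝔽 (fun _ : Fin (m + 1) => N) N) (α : N →ₗ[𝔽] N)
    (k : ℕ) (ξ : ZMod 2) (D : N →ₗ[𝔽] N) : Prop :=
  ∃ D' : N →ₗ[𝔽] N, IsQDerWith gr br α k ξ D D'

/-- `D` is a homogeneous generalized `α^k`-derivation of degree `ξ`:
there are `D⁽¹⁾, …, D⁽ⁿ⁾` (here `DD i` for positions `i = 1, …, n-1`, with `DD 0 = D`,
and `Dn = D⁽ⁿ⁾`) all homogeneous of degree `ξ` and commuting with `α`, satisfying the
defining identity. -/
def IsGDer {m : ℕ} (gr : ZMod 2 → Submodule 𝔽 N)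
    (br : MultilinearMap 𝔽 (fun _ : Fin (m + 1) => N) N) (α : N →ₗ[𝔽] N)
    (k : ℕ) (ξ : ZMod 2) (D : N →ₗ[𝔽] N) : Prop :=
  Homog gr ξ D ∧ D ∘ₗ α = α ∘ₗ D ∧
    ∃ (DD : Fin (m + 1) → (N →ₗ[𝔽] N)) (Dn : N →ₗ[𝔽] N),
      DD 0 = D ∧ (∀ i, Homog gr ξ (DD i)) ∧ (∀ i, DD i ∘ₗ α = α ∘ₗ DD i) ∧
      Homog gr ξ Dn ∧ Dn ∘ₗ α = α ∘ₗ Dn ∧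
      ∀ (d : Fin (m + 1) → ZMod 2) (x : Fin (m + 1) → N), (∀ i, x i ∈ gr (d i)) →
        (∑ i : Fin (m + 1), sgn 𝔽 (ξ * psum d i) •
          br (Function.update (fun j => (α ^ k) (x j)) i (DD i (x i)))) = Dn (br x)

/-- `D` is a homogeneous `α^k`-centroid element of degree `ξ`. -/
def IsCent {m : ℕ} (gr : ZMod 2 → Submodule 𝔽 N)
    (br : MultilinearMap 𝔽 (fun _ : Fin (m + 1) => N) N) (α : N →ₗ[𝔽] N)
    (k : ℕ) (ξ : ZMod 2) (D : N →ₗ[𝔽] N) : Prop :=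
  Homog gr ξ D ∧ D ∘ₗ α = α ∘ₗ D ∧
    ∀ (d : Fin (m + 1) → ZMod 2) (x : Fin (m + 1) → N), (∀ i, x i ∈ gr (d i)) →
      (∀ i : Fin (m + 1),
        br (Function.update (fun j => (α ^ k) (x j)) 0 (D (x 0))) =
          sgn 𝔽 (ξ * psum d i) •
            br (Function.update (fun j => (α ^ k) (x j)) i (D (x i)))) ∧
      br (Function.update (fun j => (α ^ k) (x j)) 0 (D (x 0))) = D (br x)

/-- `D` is a homogeneous `α^k`-quasicentroid element of degree `ξ`. -/
def IsQCent {m : ℕ} (gr : ZMod 2 → Submodule 𝔽 N)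
    (br : MultilinearMap 𝔽 (fun _ : Fin (m + 1) => N) N) (α : N →ₗ[𝔽] N)
    (k : ℕ) (ξ : ZMod 2) (D : N →ₗ[𝔽] N) : Prop :=
  Homog gr ξ D ∧ D ∘ₗ α = α ∘ₗ D ∧
    ∀ (d : Fin (m + 1) → ZMod 2) (x : Fin (m + 1) → N), (∀ i, x i ∈ gr (d i)) →
      ∀ i : Fin (m + 1),
        br (Function.update (fun j => (α ^ k) (x j)) 0 (D (x 0))) =
          sgn 𝔽 (ξ * psum d i) •
            br (Function.update (fun j => (α ^ k) (x j)) i (D (x i)))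

/-- `D` is a homogeneous `α^k`-center derivation of degree `ξ`. -/
def IsZDer {m : ℕ} (gr : ZMod 2 → Submodule 𝔽 N)
    (br : MultilinearMap 𝔽 (fun _ : Fin (m + 1) => N) N) (α : N →ₗ[𝔽] N)
    (k : ℕ) (ξ : ZMod 2) (D : N →ₗ[𝔽] N) : Prop :=
  Homog gr ξ D ∧ D ∘ₗ α = α ∘ₗ D ∧
    ∀ (d : Fin (m + 1) → ZMod 2) (x : Fin (m + 1) → N), (∀ i, x i ∈ gr (d i)) →
      br (Function.update (fun j => (α ^ k) (x j)) 0 (D (x 0))) = 0 ∧ D (br x) = 0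

/-- The center `Z(N) = {x : [x, y₂, …, yₙ] = 0}`. -/
def center {m : ℕ} (br : MultilinearMap 𝔽 (fun _ : Fin (m + 1) => N) N) :
    Submodule 𝔽 N where
  carrier := {x | ∀ y : Fin (m + 1) → N, br (Function.update y 0 x) = 0}
  add_mem' := by
    intro a b ha hb y
    rw [MultilinearMap.map_update_add, ha y, hb y, add_zero]
  zero_mem' := by
    intro y
    exact br.map_update_zero y 0
  smul_mem' := by
    intro c a ha y
    rw [MultilinearMap.map_update_smul, ha y, smul_zero]

/-- The Jordan product `D • E = ½(DE + (-1)^{|D||E|} ED)` of operators of degrees `ξ, η`. -/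
def jprod (𝔽 : Type*) [Field 𝔽] {N : Type*} [AddCommGroup N] [Module 𝔽 N]
    (ξ η : ZMod 2) (D E : N →ₗ[𝔽] N) : N →ₗ[𝔽] N :=
  (2 : 𝔽)⁻¹ • (D ∘ₗ E + sgn 𝔽 (ξ * η) • (E ∘ₗ D))

/-- The Hom-associator of the Jordan product with respect to `α̃(u) = α ∘ u`, where
`x, y, z` have degrees `a, b, c`. -/
def jassoc (𝔽 : Type*) [Field 𝔽] {N : Type*} [AddCommGroup N] [Module 𝔽 N]
    (α : N →ₗ[𝔽] N) (a b c : ZMod 2) (x y z : N →ₗ[𝔽] N) : N →ₗ[𝔽] N :=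
  jprod 𝔽 (a + b) c (jprod 𝔽 a b x y) (α ∘ₗ z) -
    jprod 𝔽 a (b + c) (α ∘ₗ x) (jprod 𝔽 b c y z)

/-- The bracket subalgebra `[N, …, N]`, the span of all brackets. -/
def brSub {m : ℕ} (br : MultilinearMap 𝔽 (fun _ : Fin (m + 1) => N) N) :
    Submodule 𝔽 N :=
  Submodule.span 𝔽 (Set.range fun x : Fin (m + 1) → N => br x)

/-- The bracket of `Ň = Nt + Ntⁿ` (modelled as `N × N`, first coordinate the coefficient
of `t`, second the coefficient of `tⁿ`): `[x₁t, …, xₙt] = [x₁, …, xₙ]tⁿ` and every bracket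
involving a `tⁿ`-term vanishes. -/
def checkBr {m : ℕ} (br : MultilinearMap 𝔽 (fun _ : Fin (m + 1) => N) N) :
    MultilinearMap 𝔽 (fun _ : Fin (m + 1) => N × N) (N × N) :=
  (LinearMap.inr 𝔽 N N).compMultilinearMap
    (br.compLinearMap fun _ => LinearMap.fst 𝔽 N N)

/-- The grading of `Ň = Nt + Ntⁿ`. -/
def checkGr (gr : ZMod 2 → Submodule 𝔽 N) (g : ZMod 2) : Submodule 𝔽 (N × N) :=
  (gr g).prod (gr g)

/-- The map `φ(D) : Ň → Ň`, `φ(D)(at + utⁿ + btⁿ) = D(a)t + D'(b)tⁿ`, where `π` is the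
projection of `N` onto `[N, …, N]` along `U`. -/
def phiMap (D D' π : N →ₗ[𝔽] N) : N × N →ₗ[𝔽] N × N :=
  LinearMap.prodMap D (D' ∘ₗ π)

section AuxProp34

variable {𝔽 : Type*} [Field 𝔽]
variable {N : Type*} [AddCommGroup N] [Module 𝔽 N]

lemma sgn_add' (a b : ZMod 2) : sgn 𝔽 (a + b) = sgn 𝔽 a * sgn 𝔽 b := by
  have h2 : ∀ c : ZMod 2, c = 0 ∨ c = 1 := by decide
  rcases h2 a with rfl | rfl <;> rcases h2 b with rfl | rfl <;>
    simp [sgn, show (1+1:ZMod 2)=0 from rfl, show (1:ZMod 2) ≠ 0 from by decide]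

lemma multilinear_vanish : ∀ {p : ℕ} (f : MultilinearMap 𝔽 (fun _ : Fin p => N) N) (S : Set N),
    Submodule.span 𝔽 S = ⊤ → (∀ z : Fin p → N, (∀ i, z i ∈ S) → f z = 0) → f = 0 := by
  intro p
  induction p with
  | zero =>
    intro f S _ h
    ext z
    simpa using h z (fun i => i.elim0)
  | succ p ih =>
    intro f S hS h
    have key : ∀ a : N, f.curryLeft a = 0 := by
      intro a
      have ha : a ∈ Submodule.span 𝔽 S := hS ▸ Submodule.mem_top
      induction ha using Submodule.span_induction with
      | mem u hu =>
        exact ih _ S hS (fun z hz => h (Fin.cons u z)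
          (fun i => by
            refine Fin.cases ?_ ?_ i
            · simpa using hu
            · intro j; simpa using hz j))
      | zero => simp
      | add u v _ _ hu hv => rw [map_add, hu, hv, add_zero]
      | smul c u _ hu => rw [map_smul, hu, smul_zero]
    ext z
    have := congrArg (fun g => g (Fin.tail z)) (key (z 0))
    simpa [Fin.cons_self_tail] using this

lemma pow_mem_gr (gr : ZMod 2 → Submodule 𝔽 N) (α : N →ₗ[𝔽] N)
    (hα : ∀ g : ZMod 2, ∀ x ∈ gr g, α x ∈ gr g) (s : ℕ) (g : ZMod 2) (x : N)
    (hx : x ∈ gr g) : (α ^ s) x ∈ gr g := by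
  induction s generalizing x with
  | zero => simpa using hx
  | succ n ih =>
    rw [pow_succ, Module.End.mul_apply]
    exact ih _ (hα g x hx)

lemma comm_pow (α D : N →ₗ[𝔽] N) (h : D ∘ₗ α = α ∘ₗ D) (s : ℕ) (x : N) :
    D ((α ^ s) x) = (α ^ s) (D x) := by
  have h' : ∀ y, D (α y) = α (D y) := by
    intro y
    have := LinearMap.ext_iff.mp h y
    simpa using this
  induction s generalizing x with
  | zero => simp
  | succ n ih =>
    rw [pow_succ, Module.End.mul_apply, Module.End.mul_apply, ih (α x), h' x]

lemma pow_surj (α : N →ₗ[𝔽] N) (hα : Function.Surjective α) (n : ℕ) :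
    Function.Surjective (α ^ n : N →ₗ[𝔽] N) := by
  induction n with
  | zero => intro x; exact ⟨x, by simp⟩
  | succ p ih =>
    rw [pow_succ]
    intro x
    obtain ⟨y, hy⟩ := ih x
    obtain ⟨z, hz⟩ := hα y
    exact ⟨z, by rw [Module.End.mul_apply, hz, hy]⟩

lemma val_one_fin {m : ℕ} (hm : 1 ≤ m) : ((1 : Fin (m+1)) : ℕ) = 1 := by
  rw [Fin.val_one']
  exact Nat.mod_eq_of_lt (by omega)

lemma one_ne_zero_fin {m : ℕ} (hm : 1 ≤ m) : (1 : Fin (m+1)) ≠ 0 := by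
  intro h
  have := congrArg Fin.val h
  rw [val_one_fin hm] at this
  simp at this

lemma psum_one' {m : ℕ} (hm : 1 ≤ m) (d : Fin (m+1) → ZMod 2) : psum d 1 = d 0 := by
  unfold psum
  have hfil : Finset.univ.filter (fun j : Fin (m+1) => j < 1) = {0} := by
    ext j
    simp only [Finset.mem_filter, Finset.mem_univ, true_and, Finset.mem_singleton,
      Fin.lt_def, val_one_fin hm, Fin.ext_iff, Fin.val_zero]
    omega
  rw [hfil, Finset.sum_singleton]

lemma core_vanish {m : ℕ} (hm : 1 ≤ m)
    (gr : ZMod 2 → Submodule 𝔽 N) (br : MultilinearMap 𝔽 (fun _ : Fin (m + 1) => N) N)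
    (α : N →ₗ[𝔽] N) (H : IsMNHLS gr br α)
    (k s : ℕ) (ξ η : ZMod 2) (D E : N →ₗ[𝔽] N)
    (hD : IsCent gr br α k ξ D) (hE : IsQCent gr br α s η E)
    (g : ZMod 2) (x : N) (hx : x ∈ gr g)
    (e : Fin m → ZMod 2) (w : Fin m → N) (hw : ∀ i, w i ∈ gr (e i)) :
    br (Function.update (fun j => (α ^ (k+s)) ((Fin.cons x w : Fin (m+1) → N) j)) 0
        (D (E x) - sgn 𝔽 (ξ * η) • E (D x))) = 0 := by
  have h10 : (1 : Fin (m+1)) ≠ 0 := one_ne_zero_fin hm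
  set Z : Fin (m+1) → N := Fin.cons x w with hZdef
  set dd : Fin (m+1) → ZMod 2 := Fin.cons g e with hdddef
  have hZ : ∀ i, Z i ∈ gr (dd i) := by
    intro i
    refine Fin.cases ?_ ?_ i
    · simpa [hZdef, hdddef] using hx
    · intro j; simpa [hZdef, hdddef] using hw j
  set base : Fin (m+1) → N := fun j => (α ^ (k+s)) (Z j) with hbasedef
  -- split the bracket
  rw [MultilinearMap.map_update_sub, MultilinearMap.map_update_smul]
  -- Term 1 : br (update base 0 (D (E x)))
  set v : Fin (m+1) → N := Function.update (fun j => (α ^ s) (Z j)) 0 (E x) with hvdef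
  set dv : Fin (m+1) → ZMod 2 := Function.update dd 0 (g + η) with hdvdef
  have hvmem : ∀ i, v i ∈ gr (dv i) := by
    intro i
    by_cases hi : i = 0
    · subst hi
      simp only [hvdef, hdvdef, Function.update_self]
      have := hE.1 (dd 0) (Z 0) (hZ 0)
      simpa [hZdef, hdddef] using this
    · simp only [hvdef, hdvdef, Function.update_of_ne hi]
      exact pow_mem_gr gr α H.alpha_even s _ _ (hZ i)
  have hcent1 := (hD.2.2 dv v hvmem).2
  have e1 : Function.update (fun j => (α ^ k) (v j)) 0 (D (v 0)) =
      Function.update base 0 (D (E x)) := by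
    funext j
    by_cases hj : j = 0
    · subst hj
      simp [hvdef]
    · rw [Function.update_of_ne hj, Function.update_of_ne hj]
      simp only [hvdef, Function.update_of_ne hj, hbasedef]
      rw [pow_add, Module.End.mul_apply]
  rw [e1] at hcent1
  -- Step B : br v via quasicentroid at index 1
  have hqc1 := hE.2.2 dd Z hZ 1
  have hv0 : Function.update (fun j => (α ^ s) (Z j)) 0 (E (Z 0)) = v := by
    simp [hvdef, hZdef]
  rw [hv0, psum_one' hm] at hqc1
  have hdd0 : dd 0 = g := by simp [hdddef]
  rw [hdd0] at hqc1
  set t : Fin (m+1) → N := Function.update (fun j => (α ^ s) (Z j)) 1 (E (Z 1)) with htdef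
  -- Step C : D (br t) via centroid
  set dt : Fin (m+1) → ZMod 2 := Function.update dd 1 (dd 1 + η) with hdtdef
  have htmem : ∀ i, t i ∈ gr (dt i) := by
    intro i
    by_cases hi : i = 1
    · subst hi
      simp only [htdef, hdtdef, Function.update_self]
      exact hE.1 (dd 1) (Z 1) (hZ 1)
    · simp only [htdef, hdtdef, Function.update_of_ne hi]
      exact pow_mem_gr gr α H.alpha_even s _ _ (hZ i)
  have hcent2 := (hD.2.2 dt t htmem).2
  set r : Fin (m+1) → N := Function.update (fun j => (α ^ k) (t j)) 0 (D (t 0)) with hrdef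
  -- Term 2 : via quasicentroid applied to u
  set u : Fin (m+1) → N := Function.update (fun j => (α ^ k) (Z j)) 0 (D x) with hudef
  set du : Fin (m+1) → ZMod 2 := Function.update dd 0 (g + ξ) with hdudef
  have humem : ∀ i, u i ∈ gr (du i) := by
    intro i
    by_cases hi : i = 0
    · subst hi
      simp only [hudef, hdudef, Function.update_self]
      exact hD.1 g x hx
    · simp only [hudef, hdudef, Function.update_of_ne hi]
      exact pow_mem_gr gr α H.alpha_even k _ _ (hZ i)
  have hqc2 := hE.2.2 du u humem 1
  rw [psum_one' hm] at hqc2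
  have hdu0 : du 0 = g + ξ := by simp [hdudef]
  rw [hdu0] at hqc2
  have e2 : Function.update (fun j => (α ^ s) (u j)) 0 (E (u 0)) =
      Function.update base 0 (E (D x)) := by
    funext j
    by_cases hj : j = 0
    · subst hj
      simp [hudef]
    · rw [Function.update_of_ne hj, Function.update_of_ne hj]
      simp only [hudef, Function.update_of_ne hj, hbasedef]
      rw [← Module.End.mul_apply, ← pow_add, add_comm s k]
  rw [e2] at hqc2
  have e3 : Function.update (fun j => (α ^ s) (u j)) 1 (E (u 1)) = r := by
    funext j
    by_cases hj0 : j = 0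
    · subst hj0
      simp only [hudef, hrdef, htdef, hZdef, Function.update_self,
        Function.update_of_ne (Ne.symm h10), Fin.cons_zero]
      exact (comm_pow α D hD.2.1 s x).symm
    · by_cases hj1 : j = 1
      · subst hj1
        simp only [hudef, hrdef, htdef, Function.update_self, Function.update_of_ne h10]
        exact comm_pow α E hE.2.1 k _
      · simp only [hudef, hrdef, htdef, Function.update_of_ne hj0, Function.update_of_ne hj1]
        rw [← Module.End.mul_apply, ← Module.End.mul_apply, ← pow_add, ← pow_add, add_comm s k]
  rw [e3] at hqc2
  -- put things together
  have hsgn : sgn 𝔽 (ξ * η) * sgn 𝔽 (η * (g + ξ)) = sgn 𝔽 (η * g) := by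
    rw [← sgn_add']
    congr 1
    have h2 : ∀ a b c : ZMod 2, a * b + b * (c + a) = b * c := by decide
    exact h2 ξ η g
  rw [hcent1, hqc1, map_smul, ← hcent2, hqc2, smul_smul, hsgn]
  exact sub_self _

end AuxProp34


/-- Proposition 3.4: if `α` is surjective then `[C(N), QC(N)] ⊆ Hom(N, Z(N))`;
moreover if `Z(N) = {0}` then `[C(N), QC(N)] = {0}`. -/
theorem cent_bracket_qcent_center {𝔽 : Type*} [Field 𝔽] [CharZero 𝔽]
    {N : Type*} [AddCommGroup N] [Module 𝔽 N] {m : ℕ} (hm : 1 ≤ m)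
    (gr : ZMod 2 → Submodule 𝔽 N) (br : MultilinearMap 𝔽 (fun _ : Fin (m + 1) => N) N)
    (α : N →ₗ[𝔽] N) (H : IsMNHLS gr br α) (hα : Function.Surjective α)
    (k s : ℕ) (ξ η : ZMod 2) (D E : N →ₗ[𝔽] N)
    (hD : IsCent gr br α k ξ D) (hE : IsQCent gr br α s η E) :
    (∀ x : N, (D ∘ₗ E - sgn 𝔽 (ξ * η) • (E ∘ₗ D)) x ∈ center br) ∧
      (center br = ⊥ → D ∘ₗ E - sgn 𝔽 (ξ * η) • (E ∘ₗ D) = 0)  := by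
  have part1 : ∀ x : N, (D ∘ₗ E - sgn 𝔽 (ξ * η) • (E ∘ₗ D)) x ∈ center br := by
    intro x
    have htop : (⨆ g, gr g) = ⊤ := H.internal.submodule_iSup_eq_top
    have hx : x ∈ ⨆ g, gr g := htop ▸ Submodule.mem_top
    refine Submodule.iSup_induction (motive := fun y : N =>
      (D ∘ₗ E - sgn 𝔽 (ξ * η) • (E ∘ₗ D)) y ∈ center br) gr hx ?_ ?_ ?_
    · intro g y hy
      -- homogeneous case
      classical
      intro yt
      have hval : (D ∘ₗ E - sgn 𝔽 (ξ * η) • (E ∘ₗ D)) y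
          = D (E y) - sgn 𝔽 (ξ * η) • E (D y) := by
        simp [LinearMap.sub_apply, LinearMap.smul_apply, LinearMap.comp_apply]
      rw [hval]
      set c : N := D (E y) - sgn 𝔽 (ξ * η) • E (D y) with hcdef
      set S : Set N := (⇑(α ^ (k+s) : N →ₗ[𝔽] N)) '' (↑(gr 0) ∪ ↑(gr 1)) with hSdef
      have hspan : Submodule.span 𝔽 S = ⊤ := by
        rw [hSdef, ← Submodule.map_span]
        have h1 : Submodule.span 𝔽 (↑(gr 0) ∪ ↑(gr 1)) = gr 0 ⊔ gr 1 := by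
          rw [Submodule.span_union, Submodule.span_eq, Submodule.span_eq]
        have h2 : gr 0 ⊔ gr 1 = ⊤ := by
          refine le_antisymm le_top ?_
          rw [← htop]
          refine iSup_le fun g => ?_
          fin_cases g
          · exact le_sup_left
          · exact le_sup_right
        rw [h1, h2, Submodule.map_top, LinearMap.range_eq_top]
        exact pow_surj α hα (k+s)
      have hvanish : ∀ z : Fin m → N, (∀ i, z i ∈ S) → br.curryLeft c z = 0 := by
        intro z hz
        choose w hwmem hweq using hz
        set e : Fin m → ZMod 2 := fun i => if w i ∈ gr 0 then 0 else 1 with hedef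
        have hwe : ∀ i, w i ∈ gr (e i) := by
          intro i
          simp only [hedef]
          split
          · assumption
          · rcases hwmem i with h | h
            · exact absurd h (by assumption)
            · exact h
        have hcons : Fin.cons c z = Function.update
            (fun j => (α ^ (k+s)) ((Fin.cons y w : Fin (m+1) → N) j)) 0 c := by
          funext j
          refine Fin.cases ?_ ?_ j
          · simp
          · intro i
            rw [Fin.cons_succ, Function.update_of_ne (Fin.succ_ne_zero i), Fin.cons_succ, hweq]
        rw [MultilinearMap.curryLeft_apply, hcons, hcdef]
        exact core_vanish hm gr br α H k s ξ η D E hD hE g y hy e w hwe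
      have hF : br.curryLeft c = 0 := multilinear_vanish (br.curryLeft c) S hspan hvanish
      have hupdate : Function.update yt 0 c = Fin.cons c (Fin.tail yt) := by
        funext j
        refine Fin.cases ?_ ?_ j
        · simp
        · intro i
          rw [Function.update_of_ne (Fin.succ_ne_zero i), Fin.cons_succ]
          rfl
      rw [hupdate, ← MultilinearMap.curryLeft_apply, hF]
      simp
    · simpa using (center br).zero_mem
    · intro y z hy hz
      rw [map_add]
      exact (center br).add_mem hy hz
  refine ⟨part1, fun hZ => ?_⟩
  ext x
  have := part1 x
  rw [hZ, Submodule.mem_bot] at this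
  simpa using this
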